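/- The multiplicity of 1 as a root of the characteristic polynomial of the Seidel matrix S equals (t_1 + t_2 + ⋯ + t_k) − k if s_1 > 1, and equals (t_1 + t_2 + ⋯ + t_k) − k + 1 if s_1 = 1. -/

import Mathlib

open Polynomial Matrix

def vx (n : ℕ) (v : Fin n → ℝ) (j : ℕ) : ℝ := if h : j < n then v ⟨j, h⟩ else 0

def pref (n : ℕ) (v : Fin n → ℝ) (m : ℕ) : ℝ := ∑ j ∈ Finset.range m, vx n v j

def qsum (γ : ℕ → ℝ) (n : ℕ) (v : Fin n → ℝ) (m : ℕ) : ℝ :=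
  ∑ j ∈ Finset.Ico m n, γ j * vx n v j

def rrow (γ : ℕ → ℝ) (n : ℕ) (v : Fin n → ℝ) (a : ℕ) : ℝ :=
  γ a * pref n v a - vx n v a + qsum γ n v (a + 1)

lemma pref_succ (n : ℕ) (v : Fin n → ℝ) (m : ℕ) :
    pref n v (m + 1) = pref n v m + vx n v m := Finset.sum_range_succ _ _

lemma qsum_succ (γ : ℕ → ℝ) (n : ℕ) (v : Fin n → ℝ) {m : ℕ} (h : m < n) :
    qsum γ n v m = γ m * vx n v m + qsum γ n v (m + 1) :=
  Finset.sum_eq_sum_Ico_succ_bot h _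

lemma qsum_last (γ : ℕ → ℝ) (n : ℕ) (v : Fin n → ℝ) : qsum γ n v n = 0 := by
  simp [qsum]

lemma rrow_diff (γ : ℕ → ℝ) (n : ℕ) (v : Fin n → ℝ) {a : ℕ} (h : a + 1 < n) :
    rrow γ n v a - rrow γ n v (a + 1) =
      (γ a - γ (a + 1)) * pref n v a - (γ (a + 1) + 1) * vx n v a
        + (γ (a + 1) + 1) * vx n v (a + 1) := by
  unfold rrow
  rw [qsum_succ γ n v h, pref_succ n v a]
  ring

lemma row_eq (γ : ℕ → ℝ) (n : ℕ) (M : Matrix (Fin n) (Fin n) ℝ)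
    (hM : ∀ i j : Fin n, M i j = if i = j then -1 else γ (max i.1 j.1))
    (v : Fin n → ℝ) {a : ℕ} (h : a < n) :
    (M *ᵥ v) ⟨a, h⟩ = rrow γ n v a := by
  have step1 : (M *ᵥ v) ⟨a, h⟩
      = ∑ j ∈ Finset.range n, (if j = a then -1 else γ (max a j)) * vx n v j := by
    rw [Matrix.mulVec, dotProduct]
    rw [← Fin.sum_univ_eq_sum_range (fun j => (if j = a then -1 else γ (max a j)) * vx n v j) n]
    refine Finset.sum_congr rfl fun b _ => ?_
    have hb : vx n v b.1 = v b := by rw [vx, dif_pos b.2]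
    rw [hb, hM ⟨a, h⟩ b]
    congr 1
    by_cases hab : (b : ℕ) = a
    · rw [if_pos hab, if_pos (by ext; exact hab.symm)]
    · rw [if_neg hab, if_neg (by intro hc; exact hab (by rw [← hc]))]
  rw [step1, Finset.range_eq_Ico, ← Finset.sum_Ico_consecutive _ (Nat.zero_le a) (le_of_lt h),
    Finset.sum_eq_sum_Ico_succ_bot h]
  have e1 : ∑ j ∈ Finset.Ico 0 a, (if j = a then -1 else γ (max a j)) * vx n v j
      = γ a * pref n v a := by
    rw [pref, Finset.range_eq_Ico, Finset.mul_sum]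
    refine Finset.sum_congr rfl fun j hj => ?_
    have hja : j < a := (Finset.mem_Ico.mp hj).2
    rw [if_neg (Nat.ne_of_lt hja), max_eq_left (le_of_lt hja)]
  have e2 : ∑ j ∈ Finset.Ico (a+1) n, (if j = a then -1 else γ (max a j)) * vx n v j
      = qsum γ n v (a+1) := by
    rw [qsum]
    refine Finset.sum_congr rfl fun j hj => ?_
    have hja : a < j := (Finset.mem_Ico.mp hj).1
    rw [if_neg (Nat.ne_of_gt hja), max_eq_right (le_of_lt hja)]
  rw [e1, e2, if_pos rfl, rrow]
  ring

lemma aux_BL (n : ℕ) (γ : ℕ → ℝ) (v : Fin n → ℝ) (a cc : ℕ)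
    (hac : a < cc) (hccn : cc < n)
    (hγin : ∀ j, a ≤ j → j < cc → γ j = 1) (hγcc : γ cc = -1)
    (hbound : a = 0 → 2 ≤ cc)
    (hγa1 : 1 ≤ a → γ (a - 1) = -1)
    (F1 : ∀ x, x + 1 < n → γ x = 1 → γ (x+1) = 1 → vx n v (x+1) = vx n v x)
    (F2 : ∀ x, x + 1 < n → γ x = -1 → γ (x+1) = 1 → pref n v (x+2) = 2 * pref n v (x+1))
    (F3 : ∀ x, x + 1 < n → γ x = 1 → γ (x+1) = -1 → pref n v x = 0) :
    ∀ m, a ≤ m → m ≤ cc → pref n v m = 0 := by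
  have hvconst : ∀ e, a + e < cc → vx n v (a + e) = vx n v a := by
    intro e
    induction e with
    | zero => intro _; rfl
    | succ f ih =>
      intro hf
      have h1 : a + f < cc := by omega
      have h2 := F1 (a + f) (by omega) (hγin _ (by omega) h1) (hγin _ (by omega) (by omega))
      rw [show a + (f + 1) = (a + f) + 1 from by omega, h2]
      exact ih h1
  have hPlin : ∀ e, a + e ≤ cc → pref n v (a + e) = pref n v a + e * vx n v a := by
    intro e
    induction e with
    | zero => intro _; simp
    | succ f ih =>
      intro hf
      rw [show a + (f + 1) = (a + f) + 1 from by omega, pref_succ, ih (by omega),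
        hvconst f (by omega)]
      push_cast
      ring
  have hPcc1 : pref n v (cc - 1) = 0 := by
    have e1 : cc - 1 + 1 = cc := by omega
    exact F3 (cc - 1) (by omega) (hγin (cc - 1) (by omega) (by omega))
      (by rw [e1]; exact hγcc)
  have hkey : pref n v a = 0 ∧ vx n v a = 0 := by
    rcases Nat.eq_zero_or_pos a with ha0 | ha1
    · have hP0 : pref n v a = 0 := by rw [ha0]; simp [pref]
      have hcc2 : 2 ≤ cc := hbound ha0
      have h2 := hPlin (cc - 1 - a) (by omega)
      rw [show a + (cc - 1 - a) = cc - 1 from by omega, hPcc1, hP0] at h2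
      have hcast : (0:ℝ) < ((cc - 1 - a : ℕ) : ℝ) := by
        exact_mod_cast Nat.pos_of_ne_zero (by omega)
      have hvx : vx n v a = 0 := by
        rcases mul_eq_zero.mp (show ((cc - 1 - a : ℕ) : ℝ) * vx n v a = 0 by linarith) with h | h
        · linarith
        · exact h
      exact ⟨hP0, hvx⟩
    · have hγam : γ (a - 1) = -1 := hγa1 ha1
      have hF2 := F2 (a - 1) (by omega) hγam
        (by rw [show a - 1 + 1 = a from by omega]; exact hγin a le_rfl hac)
      rw [show a - 1 + 2 = a + 1 from by omega, show a - 1 + 1 = a from by omega] at hF2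
      have hvx_eq : vx n v a = pref n v a := by
        rw [pref_succ] at hF2
        linarith
      have h2 := hPlin (cc - 1 - a) (by omega)
      rw [show a + (cc - 1 - a) = cc - 1 from by omega, hPcc1, hvx_eq] at h2
      have hfact : (1 + ((cc - 1 - a : ℕ) : ℝ)) * pref n v a = 0 := by linarith
      have hcast : (0:ℝ) ≤ ((cc - 1 - a : ℕ) : ℝ) := Nat.cast_nonneg _
      have hPa : pref n v a = 0 := by
        rcases mul_eq_zero.mp hfact with h | h
        · linarith
        · exact h
      exact ⟨hPa, hvx_eq.trans hPa⟩
  obtain ⟨hPa, hva⟩ := hkey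
  intro m hma hmc
  have h2 := hPlin (m - a) (by omega)
  rw [show a + (m - a) = m from by omega, hPa, hva] at h2
  simpa using h2

section KEY
variable {k n : ℕ} {B : ℕ → ℕ} {γ : ℕ → ℝ}

lemma aux_key (hk : 1 ≤ k) (hB0 : B 0 = 0) (hn : n = B (2*k))
    (hBlt : ∀ p q, p < q → q ≤ 2*k → B p < B q)
    (hgo : ∀ r j, 1 ≤ r → r ≤ k → B (2*r-2) ≤ j → j < B (2*r-1) → γ j = 1)
    (hge : ∀ r j, 1 ≤ r → r ≤ k → B (2*r-1) ≤ j → j < B (2*r) → γ j = -1)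
    (hloc : ∀ j, j < n → ∃ q, 1 ≤ q ∧ q ≤ 2*k ∧ B (q-1) ≤ j ∧ j < B q)
    (M : Matrix (Fin n) (Fin n) ℝ)
    (hM : ∀ i j : Fin n, M i j = if i = j then -1 else γ (max i.1 j.1))
    (v : Fin n → ℝ) :
    M *ᵥ v = 0 ↔ ∀ m ∈ (Finset.Icc 1 n).filter
        (fun m => m = n ∨ γ m = 1 ∨ (2 ≤ m ∧ γ (m-1) = 1)), pref n v m = 0 := by
  have hn1 : 1 ≤ n := by
    have := hBlt 0 (2*k) (by omega) le_rfl
    omega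
  -- block structure facts
  have hblock : ∀ j, j < n →
      (∃ r, 1 ≤ r ∧ r ≤ k ∧ B (2*r-2) ≤ j ∧ j < B (2*r-1) ∧ γ j = 1) ∨
      (∃ r, 1 ≤ r ∧ r ≤ k ∧ B (2*r-1) ≤ j ∧ j < B (2*r) ∧ γ j = -1) := by
    intro j hj
    obtain ⟨q, hq1, hq2, hq3, hq4⟩ := hloc j hj
    rcases Nat.even_or_odd q with ⟨r, hr⟩ | ⟨r, hr⟩
    · -- q = r + r, even block
      right
      refine ⟨r, by omega, by omega, ?_, ?_, ?_⟩
      · rw [show 2*r-1 = q-1 from by omega]; exact hq3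
      · rw [show 2*r = q from by omega]; exact hq4
      · exact hge r j (by omega) (by omega)
          (by rw [show 2*r-1 = q-1 from by omega]; exact hq3)
          (by rw [show 2*r = q from by omega]; exact hq4)
    · -- q = 2r+1, odd block
      left
      refine ⟨r+1, by omega, by omega, ?_, ?_, ?_⟩
      · rw [show 2*(r+1)-2 = q-1 from by omega]; exact hq3
      · rw [show 2*(r+1)-1 = q from by omega]; exact hq4
      · exact hgo (r+1) j (by omega) (by omega)
          (by rw [show 2*(r+1)-2 = q-1 from by omega]; exact hq3)
          (by rw [show 2*(r+1)-1 = q from by omega]; exact hq4)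
  have hγcases : ∀ j, j < n → γ j = 1 ∨ γ j = -1 := by
    intro j hj
    rcases hblock j hj with ⟨r, _, _, _, _, h⟩ | ⟨r, _, _, _, _, h⟩
    · exact Or.inl h
    · exact Or.inr h
  have hγ1 : ∀ j, j < n → γ j = 1 →
      ∃ r, 1 ≤ r ∧ r ≤ k ∧ B (2*r-2) ≤ j ∧ j < B (2*r-1) := by
    intro j hj h1
    rcases hblock j hj with ⟨r, ha, hb, hc, hd, _⟩ | ⟨r, _, _, _, _, h⟩
    · exact ⟨r, ha, hb, hc, hd⟩
    · rw [h1] at h; norm_num at h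
  have hγlast : γ (n-1) = -1 := by
    have h1 : B (2*k-1) < B (2*k) := hBlt _ _ (by omega) le_rfl
    exact hge k (n-1) hk le_rfl (by omega) (by omega)
  constructor
  · -- forward direction
    intro hv m hm
    have hR : ∀ a, a < n → rrow γ n v a = 0 := by
      intro a ha
      rw [← row_eq γ n M hM v ha, hv]
      rfl
    have hPn : pref n v n = 0 := by
      have h1 := hR (n-1) (by omega)
      rw [rrow, hγlast, show n - 1 + 1 = n from by omega, qsum_last] at h1
      have h2 : pref n v n = pref n v (n-1) + vx n v (n-1) := by
        rw [← pref_succ, show n - 1 + 1 = n from by omega]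
      linarith
    have Fdiff : ∀ a, a + 1 < n →
        (γ a - γ (a+1)) * pref n v a - (γ (a+1)+1) * vx n v a
          + (γ (a+1)+1) * vx n v (a+1) = 0 := by
      intro a ha
      have h1 := rrow_diff γ n v ha
      rw [hR a (by omega), hR (a+1) ha] at h1
      linarith
    have F1 : ∀ x, x + 1 < n → γ x = 1 → γ (x+1) = 1 → vx n v (x+1) = vx n v x := by
      intro x hx h1 h2
      have := Fdiff x hx
      rw [h1, h2] at this
      norm_num at this
      linarith
    have F2 : ∀ x, x + 1 < n → γ x = -1 → γ (x+1) = 1 →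
        pref n v (x+2) = 2 * pref n v (x+1) := by
      intro x hx h1 h2
      have h3 := Fdiff x hx
      rw [h1, h2] at h3
      have h4 := pref_succ n v x
      have h5 := pref_succ n v (x+1)
      norm_num at h3
      rw [show x + 1 + 1 = x + 2 from rfl] at h5
      linarith
    have F3 : ∀ x, x + 1 < n → γ x = 1 → γ (x+1) = -1 → pref n v x = 0 := by
      intro x hx h1 h2
      have h3 := Fdiff x hx
      rw [h1, h2] at h3
      norm_num at h3
      linarith
    simp only [Finset.mem_filter, Finset.mem_Icc] at hm
    obtain ⟨⟨hm1, hmn⟩, hcase⟩ := hm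
    by_cases hmn' : m = n
    · rw [hmn']; exact hPn
    have hmlt : m < n := lt_of_le_of_ne hmn hmn'
    have hBL : ∀ r, 1 ≤ r → r ≤ k → B (2*r-2) ≤ m → m ≤ B (2*r-1) →
        (2 ≤ m ∨ m < B (2*r-1)) → pref n v m = 0 := by
      intro r hr1 hrk hma hmc hextra
      have hac : B (2*r-2) < B (2*r-1) := hBlt _ _ (by omega) (by omega)
      have hccn : B (2*r-1) < n := by
        rw [hn]; exact hBlt _ _ (by omega) le_rfl
      refine aux_BL n γ v (B (2*r-2)) (B (2*r-1)) hac hccn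
        (fun j h1 h2 => hgo r j hr1 hrk h1 h2)
        (hge r _ hr1 hrk le_rfl (hBlt _ _ (by omega) (by omega)))
        (fun h0 => by omega)
        ?_ F1 F2 F3 m hma hmc
      intro ha1
      have hr2 : 2 ≤ r := by
        by_contra hcon
        have hr1' : r = 1 := by omega
        rw [hr1', show 2*1-2 = 0 from rfl, hB0] at ha1
        omega
      have hlt : B (2*(r-1)-1) < B (2*(r-1)) := hBlt _ _ (by omega) (by omega)
      have heq : B (2*(r-1)) = B (2*r-2) := by congr 1; omega
      refine hge (r-1) _ (by omega) (by omega) ?_ ?_ <;> omega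
    rcases hcase with h | h | ⟨h2, h3⟩
    · exact absurd h hmn'
    · obtain ⟨r, hr1, hrk, hj1, hj2⟩ := hγ1 m hmlt h
      exact hBL r hr1 hrk hj1 (by omega) (Or.inr hj2)
    · have hm1n : m - 1 < n := by omega
      obtain ⟨r, hr1, hrk, hj1, hj2⟩ := hγ1 (m-1) hm1n h3
      exact hBL r hr1 hrk (by omega) (by omega) (Or.inl h2)
  · -- backward direction
    intro hP
    have hPm : ∀ m, 1 ≤ m → m ≤ n → (m = n ∨ γ m = 1 ∨ (2 ≤ m ∧ γ (m-1) = 1)) →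
        pref n v m = 0 := by
      intro m h1 h2 h3
      exact hP m (by simp only [Finset.mem_filter, Finset.mem_Icc]; exact ⟨⟨h1, h2⟩, h3⟩)
    have hP0 : pref n v 0 = 0 := by simp [pref]
    have hPa' : ∀ a, a < n → γ a = 1 → pref n v a = 0 := by
      intro a ha h1
      rcases Nat.eq_zero_or_pos a with h | h
      · rw [h]; exact hP0
      · exact hPm a h (by omega) (Or.inr (Or.inl h1))
    have hlast : rrow γ n v (n-1) = 0 := by
      have hPn := hPm n hn1 le_rfl (Or.inl rfl)
      rw [rrow, hγlast, show n - 1 + 1 = n from by omega, qsum_last]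
      have h2 : pref n v n = pref n v (n-1) + vx n v (n-1) := by
        rw [← pref_succ, show n - 1 + 1 = n from by omega]
      linarith
    have hstep : ∀ a, a + 1 < n → rrow γ n v (a+1) = 0 → rrow γ n v a = 0 := by
      intro a ha h1
      have hd := rrow_diff γ n v ha
      rw [h1, sub_zero] at hd
      rw [hd]
      have hva : vx n v a = pref n v (a+1) - pref n v a := by rw [pref_succ]; ring
      have hva1 : vx n v (a+1) = pref n v (a+2) - pref n v (a+1) := by
        rw [show a + 2 = (a+1)+1 from rfl, pref_succ]; ring
      rw [hva, hva1]
      rcases hγcases (a+1) ha with h | h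
      · have hp1 : pref n v (a+1) = 0 := hPm (a+1) (by omega) (by omega) (Or.inr (Or.inl h))
        have hp2 : pref n v (a+2) = 0 := hPm (a+2) (by omega) (by omega)
          (Or.inr (Or.inr ⟨by omega, by rw [show a+2-1 = a+1 from rfl]; exact h⟩))
        rcases hγcases a (by omega) with h' | h'
        · rw [h, h', hPa' a (by omega) h', hp1, hp2]; ring
        · rw [h, h', hp1, hp2]; ring
      · rcases hγcases a (by omega) with h' | h'
        · rw [h, h', hPa' a (by omega) h']; ring
        · rw [h, h']; ring
    have hdown : ∀ e, e < n → rrow γ n v (n - 1 - e) = 0 := by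
      intro e
      induction e with
      | zero => intro _; simpa using hlast
      | succ f ih =>
        intro hf
        have h1 : n - 1 - (f+1) + 1 = n - 1 - f := by omega
        exact hstep _ (by omega) (by rw [h1]; exact ih (by omega))
    funext i
    obtain ⟨a, ha⟩ := i
    rw [row_eq γ n M hM v ha]
    have h1 : a = n - 1 - (n - 1 - a) := by omega
    have h2 := hdown (n - 1 - a) (by omega)
    rw [← h1] at h2
    rw [h2]
    rfl
end KEY

open Polynomial Matrix

lemma aux_charmatrix_conj {n : ℕ} (V D : Matrix (Fin n) (Fin n) ℝ)
    (h1 : V * star V = 1) :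
    charmatrix (V * D * star V) =
      (C : ℝ →+* ℝ[X]).mapMatrix V * charmatrix D * (C : ℝ →+* ℝ[X]).mapMatrix (star V) := by
  have hc : ∀ M : Matrix (Fin n) (Fin n) ℝ[X],
      Matrix.scalar (Fin n) (X : ℝ[X]) * M = M * Matrix.scalar (Fin n) (X : ℝ[X]) :=
    fun M => (Matrix.scalar_commute (X : ℝ[X]) (fun r' => Commute.all _ _) M).eq
  have hVV : (C : ℝ →+* ℝ[X]).mapMatrix V * (C : ℝ →+* ℝ[X]).mapMatrix (star V) = 1 := by
    rw [← _root_.map_mul, h1, _root_.map_one]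
  have key : (C : ℝ →+* ℝ[X]).mapMatrix V * Matrix.scalar (Fin n) (X : ℝ[X]) *
      (C : ℝ →+* ℝ[X]).mapMatrix (star V) = Matrix.scalar (Fin n) (X : ℝ[X]) := by
    rw [mul_assoc, hc, ← mul_assoc, hVV, one_mul]
  unfold charmatrix
  rw [mul_sub, sub_mul, key, ← _root_.map_mul, ← _root_.map_mul]

lemma aux_charpoly_conj {n : ℕ} (V D : Matrix (Fin n) (Fin n) ℝ)
    (h1 : V * star V = 1) :
    (V * D * star V).charpoly = D.charpoly := by
  have hd : ((C : ℝ →+* ℝ[X]).mapMatrix V).det * ((C : ℝ →+* ℝ[X]).mapMatrix (star V)).det = 1 := by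
    rw [← det_mul, ← _root_.map_mul, h1, _root_.map_one, det_one]
  rw [Matrix.charpoly, aux_charmatrix_conj V D h1, det_mul, det_mul, Matrix.charpoly]
  calc ((C : ℝ →+* ℝ[X]).mapMatrix V).det * (charmatrix D).det *
        ((C : ℝ →+* ℝ[X]).mapMatrix (star V)).det
      = ((C : ℝ →+* ℝ[X]).mapMatrix V).det * ((C : ℝ →+* ℝ[X]).mapMatrix (star V)).det *
        (charmatrix D).det := by ring
    _ = (charmatrix D).det := by rw [hd, one_mul]

lemma aux_charpoly_diagonal {n : ℕ} (d : Fin n → ℝ) :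
    (Matrix.diagonal d).charpoly = ∏ i, (X - C (d i)) := by
  have : charmatrix (Matrix.diagonal d) = Matrix.diagonal (fun i => X - C (d i)) := by
    ext i j
    by_cases h : i = j
    · subst h; simp
    · simp [h, Matrix.diagonal_apply_ne _ h]
  rw [Matrix.charpoly, this, det_diagonal]

open Polynomial Matrix

lemma aux_rootMult_prod {n : ℕ} (d : Fin n → ℝ) (μ : ℝ) :
    (∏ i, (X - C (d i))).rootMultiplicity μ = Fintype.card {i // d i = μ} := by
  classical
  have hprod : (∏ i, (X - C (d i))) =
      ((Finset.univ.val.map d).map (fun a : ℝ => X - C a)).prod := by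
    rw [Multiset.map_map]
    rfl
  rw [← Polynomial.count_roots, hprod, Polynomial.roots_multiset_prod_X_sub_C,
    Multiset.count_map, Fintype.card_subtype, Finset.card_filter]
  simp [eq_comm]
  rfl

open Polynomial Matrix

lemma aux_smul_one {n : ℕ} (μ : ℝ) :
    μ • (1 : Matrix (Fin n) (Fin n) ℝ) = Matrix.diagonal (fun _ => μ) := by
  ext i j
  by_cases h : i = j
  · subst h; simp
  · simp [h, Matrix.one_apply_ne h, Matrix.diagonal_apply_ne _ h]

lemma aux_herm (n : ℕ) (A : Matrix (Fin n) (Fin n) ℝ) (hA : A.IsHermitian) (μ : ℝ) :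
    A.charpoly.rootMultiplicity μ + (A - μ • (1 : Matrix (Fin n) (Fin n) ℝ)).rank = n := by
  classical
  set d : Fin n → ℝ := hA.eigenvalues with hd
  set V : Matrix (Fin n) (Fin n) ℝ := (hA.eigenvectorUnitary : Matrix (Fin n) (Fin n) ℝ) with hV
  have h1 : V * star V = 1 := (Matrix.mem_unitaryGroup_iff).mp hA.eigenvectorUnitary.2
  have h2 : star V * V = 1 := (Matrix.mem_unitaryGroup_iff').mp hA.eigenvectorUnitary.2
  have hspec : A = V * Matrix.diagonal d * star V := by
    have := hA.spectral_theorem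
    simpa [RCLike.ofReal_real_eq_id] using this
  -- charpoly part
  have hchar : A.charpoly.rootMultiplicity μ = Fintype.card {i // d i = μ} := by
    rw [hspec, aux_charpoly_conj _ _ h1, aux_charpoly_diagonal, aux_rootMult_prod]
  -- rank part
  have hsub : A - μ • (1 : Matrix (Fin n) (Fin n) ℝ) =
      V * Matrix.diagonal (fun i => d i - μ) * star V := by
    have : Matrix.diagonal (fun i => d i - μ) =
        Matrix.diagonal d - μ • (1 : Matrix (Fin n) (Fin n) ℝ) := by
      rw [aux_smul_one]
      ext i j
      by_cases h : i = j
      · subst h; simp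
      · simp [Matrix.diagonal_apply_ne _ h]
    rw [this, mul_sub, sub_mul, ← hspec]
    congr 1
    rw [Matrix.mul_smul, Matrix.smul_mul, mul_one, h1]
  have hdetV : IsUnit V.det := by
    apply IsUnit.of_mul_eq_one (star V).det
    rw [← det_mul, h1, det_one]
  have hdetVs : IsUnit (star V).det := by
    apply IsUnit.of_mul_eq_one V.det
    rw [← det_mul, h2, det_one]
  have hrank : (A - μ • (1 : Matrix (Fin n) (Fin n) ℝ)).rank
      = Fintype.card {i // d i - μ ≠ 0} := by
    rw [hsub, Matrix.rank_mul_eq_left_of_isUnit_det (star V) _ hdetVs,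
      Matrix.rank_mul_eq_right_of_isUnit_det V _ hdetV, Matrix.rank_diagonal]
  have hcompl : Fintype.card {i // d i - μ ≠ 0} = Fintype.card {i // ¬ (d i = μ)} :=
    Fintype.card_congr (Equiv.subtypeEquivRight (fun i => by rw [sub_ne_zero]))
  rw [hchar, hrank, hcompl, Fintype.card_subtype_compl]
  have hle : Fintype.card {i // d i = μ} ≤ Fintype.card (Fin n) := Fintype.card_subtype_le _
  rw [Fintype.card_fin] at *
  omega

open Polynomial Matrix

lemma aux_rank_nullity {n : ℕ} (M : Matrix (Fin n) (Fin n) ℝ) :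
    M.rank + Module.finrank ℝ (LinearMap.ker M.mulVecLin) = n := by
  have := LinearMap.finrank_range_add_finrank_ker M.mulVecLin
  rw [Module.finrank_fintype_fun_eq_card, Fintype.card_fin] at this
  exact this

lemma aux_ker_card {n : ℕ} (M : Matrix (Fin n) (Fin n) ℝ) (Bad : Finset ℕ)
    (hBn : ∀ m ∈ Bad, m ≤ n) (h0 : (0 : ℕ) ∉ Bad)
    (hker : ∀ v : Fin n → ℝ, M *ᵥ v = 0 ↔
      ∀ m ∈ Bad, (∑ j ∈ Finset.range m, if h : j < n then v ⟨j, h⟩ else 0) = 0) :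
    Module.finrank ℝ (LinearMap.ker M.mulVecLin) + Bad.card = n := by
  classical
  let Φ : (Fin n → ℝ) →ₗ[ℝ] ({ m // m ∈ Bad } → ℝ) :=
    { toFun := fun v m => ∑ j ∈ Finset.range m.1, if h : j < n then v ⟨j, h⟩ else 0
      map_add' := by
        intro u v
        funext m
        rw [Pi.add_apply, ← Finset.sum_add_distrib]
        refine Finset.sum_congr rfl fun j _ => ?_
        by_cases h : j < n <;> simp [h]
      map_smul' := by
        intro c v
        funext m
        simp only [Pi.smul_apply, RingHom.id_apply, smul_eq_mul, Finset.mul_sum]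
        refine Finset.sum_congr rfl fun j _ => ?_
        by_cases h : j < n <;> simp [h] }
  have hkereq : LinearMap.ker M.mulVecLin = LinearMap.ker Φ := by
    ext v
    rw [LinearMap.mem_ker, LinearMap.mem_ker, Matrix.mulVecLin_apply, hker]
    constructor
    · intro h
      funext m
      exact h m.1 m.2
    · intro h m hm
      exact congrFun h ⟨m, hm⟩
  have hsurj : Function.Surjective Φ := by
    intro y
    set g : ℕ → ℝ := fun m => if h : m ∈ Bad then y ⟨m, h⟩ else 0 with hg
    refine ⟨fun i => g (i.1 + 1) - g i.1, ?_⟩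
    funext m
    have hmn : m.1 ≤ n := hBn m.1 m.2
    have : ∀ j ∈ Finset.range m.1,
        (if h : j < n then g (j + 1) - g j else 0) = g (j + 1) - g j := by
      intro j hj
      rw [dif_pos (lt_of_lt_of_le (Finset.mem_range.mp hj) hmn)]
    show (∑ j ∈ Finset.range m.1, if h : j < n then g (j+1) - g j else 0) = y m
    rw [Finset.sum_congr rfl this, Finset.sum_range_sub g]
    have hg0 : g 0 = 0 := dif_neg h0
    rw [hg0, sub_zero]
    show (if h : (m : ℕ) ∈ Bad then y ⟨m, h⟩ else 0) = y m
    rw [dif_pos m.2, Subtype.coe_eta]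
  have h1 := LinearMap.finrank_range_add_finrank_ker Φ
  rw [Module.finrank_fintype_fun_eq_card, Fintype.card_fin,
    LinearMap.range_eq_top.mpr hsurj, finrank_top,
    Module.finrank_fintype_fun_eq_card] at h1
  rw [hkereq]
  have : Fintype.card { m // m ∈ Bad } = Bad.card := Fintype.card_coe Bad
  omega

open Polynomial Matrix

section COUNT
variable {k n : ℕ} {B : ℕ → ℕ} {γ : ℕ → ℝ}

lemma aux_block (hk : 1 ≤ k) (hn : n = B (2*k))
    (hgo : ∀ r j, 1 ≤ r → r ≤ k → B (2*r-2) ≤ j → j < B (2*r-1) → γ j = 1)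
    (hge : ∀ r j, 1 ≤ r → r ≤ k → B (2*r-1) ≤ j → j < B (2*r) → γ j = -1)
    (hloc : ∀ j, j < n → ∃ q, 1 ≤ q ∧ q ≤ 2*k ∧ B (q-1) ≤ j ∧ j < B q) :
    ∀ j, j < n →
      (∃ r, 1 ≤ r ∧ r ≤ k ∧ B (2*r-2) ≤ j ∧ j < B (2*r-1) ∧ γ j = 1) ∨
      (∃ r, 1 ≤ r ∧ r ≤ k ∧ B (2*r-1) ≤ j ∧ j < B (2*r) ∧ γ j = -1) := by
  intro j hj
  obtain ⟨q, hq1, hq2, hq3, hq4⟩ := hloc j hj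
  rcases Nat.even_or_odd q with ⟨r, hr⟩ | ⟨r, hr⟩
  · right
    refine ⟨r, by omega, by omega, ?_, ?_, ?_⟩
    · rw [show 2*r-1 = q-1 from by omega]; exact hq3
    · rw [show 2*r = q from by omega]; exact hq4
    · exact hge r j (by omega) (by omega)
        (by rw [show 2*r-1 = q-1 from by omega]; exact hq3)
        (by rw [show 2*r = q from by omega]; exact hq4)
  · left
    refine ⟨r+1, by omega, by omega, ?_, ?_, ?_⟩
    · rw [show 2*(r+1)-2 = q-1 from by omega]; exact hq3
    · rw [show 2*(r+1)-1 = q from by omega]; exact hq4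
    · exact hgo (r+1) j (by omega) (by omega)
        (by rw [show 2*(r+1)-2 = q-1 from by omega]; exact hq3)
        (by rw [show 2*(r+1)-1 = q from by omega]; exact hq4)

lemma aux_count (hk : 1 ≤ k) (hB0 : B 0 = 0) (hn : n = B (2*k))
    (hBlt : ∀ p q, p < q → q ≤ 2*k → B p < B q)
    (hgo : ∀ r j, 1 ≤ r → r ≤ k → B (2*r-2) ≤ j → j < B (2*r-1) → γ j = 1)
    (hge : ∀ r j, 1 ≤ r → r ≤ k → B (2*r-1) ≤ j → j < B (2*r) → γ j = -1)
    (hloc : ∀ j, j < n → ∃ q, 1 ≤ q ∧ q ≤ 2*k ∧ B (q-1) ≤ j ∧ j < B q)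
    (t : ℕ → ℕ) (ht1 : ∀ i, 1 ≤ i → i ≤ k → 1 ≤ t i)
    (s1 : ℕ) (hB1 : B 1 = s1)
    (hBr : ∀ r, 1 ≤ r → r ≤ k → B (2*r) = B (2*r-1) + t r) :
    ((Finset.Icc 1 n).filter
        (fun m => ¬(m = n ∨ γ m = 1 ∨ (2 ≤ m ∧ γ (m-1) = 1)))).card
      = (∑ i ∈ Finset.Icc 1 k, t i) - k + (if s1 = 1 then 1 else 0) := by
  classical
  have hBle : ∀ p q, p ≤ q → q ≤ 2*k → B p ≤ B q := by
    intro p q h1 h2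
    rcases eq_or_lt_of_le h1 with h | h
    · rw [h]
    · exact le_of_lt (hBlt p q h h2)
  have hB1pos : 1 ≤ B 1 := by have := hBlt 0 1 (by omega) (by omega); omega
  have hblock := aux_block hk hn hgo hge hloc
  have hB2 : B 2 = B 1 + t 1 := by
    have := hBr 1 le_rfl hk
    simpa using this
  have hn2 : 2 ≤ n := by
    have h1 := hBle 2 (2*k) (by omega) le_rfl
    have := ht1 1 le_rfl hk
    omega
  set Extra : Finset ℕ := if s1 = 1 then {1} else ∅ with hExtra
  have hExtraMem : ∀ m, m ∈ Extra ↔ (s1 = 1 ∧ m = 1) := by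
    intro m
    rw [hExtra]
    split_ifs with h <;> simp [h]
  set BU : Finset ℕ := (Finset.Icc 1 k).biUnion
      (fun r => Finset.Ico (B (2*r-1)+1) (B (2*r))) with hBU
  have hGood : (Finset.Icc 1 n).filter
      (fun m => ¬(m = n ∨ γ m = 1 ∨ (2 ≤ m ∧ γ (m-1) = 1))) = Extra ∪ BU := by
    ext m
    simp only [Finset.mem_filter, Finset.mem_Icc, Finset.mem_union, hExtraMem, hBU,
      Finset.mem_biUnion, Finset.mem_Ico]
    constructor
    · rintro ⟨⟨hm1, hmn⟩, hnot⟩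
      push_neg at hnot
      obtain ⟨hne, hγm, himp⟩ := hnot
      have hmlt : m < n := lt_of_le_of_ne hmn hne
      rcases hblock m hmlt with ⟨r, _, _, _, _, hγ⟩ | ⟨r, hr1, hrk, hj1, hj2, hγ⟩
      · exact absurd hγ hγm
      by_cases hm2 : 2 ≤ m
      · have hne1 : γ (m-1) ≠ 1 := himp hm2
        have hBne : B (2*r-1) ≠ m := by
          intro he
          have hlow := hBlt (2*r-2) (2*r-1) (by omega) (by omega)
          exact hne1 (hgo r (m-1) hr1 hrk (by omega) (by omega))
        right
        exact ⟨r, ⟨hr1, hrk⟩, by omega, hj2⟩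
      · left
        have hm1' : m = 1 := by omega
        have hB1le : B 1 ≤ B (2*r-1) := hBle 1 (2*r-1) (by omega) (by omega)
        constructor
        · omega
        · exact hm1'
    · rintro (⟨hs1, hm1⟩ | ⟨r, ⟨hr1, hrk⟩, hBm, hmB⟩)
      · subst hm1
        have hγ1 : γ 1 = -1 := by
          refine hge 1 1 le_rfl hk ?_ ?_
          · simp only [show 2*1-1 = 1 from rfl]; omega
          · simp only [show 2*1 = 2 from rfl]
            have := ht1 1 le_rfl hk
            omega
        refine ⟨⟨le_rfl, by omega⟩, ?_⟩
        push_neg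
        refine ⟨by omega, by rw [hγ1]; norm_num, ?_⟩
        intro h
        omega
      · have hmn : m < n := by
          have := hBle (2*r) (2*k) (by omega) le_rfl
          omega
        have hB1le : B 1 ≤ B (2*r-1) := hBle 1 (2*r-1) (by omega) (by omega)
        have hγm : γ m = -1 := hge r m hr1 hrk (by omega) hmB
        have hγm1 : γ (m-1) = -1 := hge r (m-1) hr1 hrk (by omega) (by omega)
        refine ⟨⟨by omega, by omega⟩, ?_⟩
        push_neg
        refine ⟨by omega, by rw [hγm]; norm_num, fun _ => by rw [hγm1]; norm_num⟩
  rw [hGood]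
  have hdisj : Disjoint Extra BU := by
    rw [Finset.disjoint_left]
    intro x hx
    rw [hExtraMem] at hx
    obtain ⟨_, rfl⟩ := hx
    rw [hBU]
    simp only [Finset.mem_biUnion, Finset.mem_Ico, Finset.mem_Icc, not_exists]
    rintro r ⟨⟨hr1, hrk⟩, h1, h2⟩
    have hB1le : B 1 ≤ B (2*r-1) := hBle 1 (2*r-1) (by omega) (by omega)
    omega
  rw [Finset.card_union_of_disjoint hdisj]
  have hcardBU : BU.card = ∑ r ∈ Finset.Icc 1 k, (t r - 1) := by
    rw [hBU, Finset.card_biUnion]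
    · refine Finset.sum_congr rfl fun r hr => ?_
      rw [Finset.mem_Icc] at hr
      rw [Nat.card_Ico]
      have := hBr r hr.1 hr.2
      omega
    · intro r hr r' hr' hne
      rw [Finset.mem_coe, Finset.mem_Icc] at hr hr'
      rw [Function.onFun, Finset.disjoint_left]
      intro x hx hx'
      rw [Finset.mem_Ico] at hx hx'
      rcases lt_or_gt_of_ne hne with h | h
      · have : B (2*r) ≤ B (2*r'-1) := hBle (2*r) (2*r'-1) (by omega) (by omega)
        omega
      · have : B (2*r') ≤ B (2*r-1) := hBle (2*r') (2*r-1) (by omega) (by omega)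
        omega
  have hsum : ∑ r ∈ Finset.Icc 1 k, (t r - 1) + k = ∑ r ∈ Finset.Icc 1 k, t r := by
    have h1 : ∑ r ∈ Finset.Icc 1 k, (t r - 1) + ∑ r ∈ Finset.Icc 1 k, 1
        = ∑ r ∈ Finset.Icc 1 k, t r := by
      rw [← Finset.sum_add_distrib]
      refine Finset.sum_congr rfl fun r hr => ?_
      rw [Finset.mem_Icc] at hr
      have := ht1 r hr.1 hr.2
      omega
    rw [Finset.sum_const, Nat.card_Icc, smul_eq_mul, mul_one] at h1
    simpa using h1
  have hcardExtra : Extra.card = if s1 = 1 then 1 else 0 := by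
    rw [hExtra]
    split_ifs <;> simp
  rw [hcardExtra, hcardBU]
  omega
end COUNT

open Polynomial Matrix

theorem stmt_11
    (k : ℕ) (hk : 1 ≤ k) (s t : ℕ → ℕ)
    (hs : ∀ i, 1 ≤ i → i ≤ k → 1 ≤ s i) (ht : ∀ i, 1 ≤ i → i ≤ k → 1 ≤ t i)
    (c : ℕ → ℕ)
    (hc : ∀ i, 1 ≤ i → i ≤ k → c (2 * i - 1) = s i ∧ c (2 * i) = t i)
    (B : ℕ → ℕ) (hB0 : B 0 = 0) (hB : ∀ p, B (p + 1) = B p + c (p + 1))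
    (n : ℕ) (hn : n = B (2 * k))
    (β : ℕ → ℝ)
    (hβ : ∀ p j, 1 ≤ p → p ≤ 2 * k → B (p - 1) < j → j ≤ B p →
      β j = (-1 : ℝ) ^ (p + 1))
    (S : Matrix (Fin n) (Fin n) ℝ)
    (hS : ∀ i j : Fin n, S i j = if i = j then 0 else β (max (i : ℕ) (j : ℕ) + 1)) :
    (1 < s 1 → S.charpoly.rootMultiplicity 1 =
      (∑ i ∈ Finset.Icc 1 k, t i) - k) ∧
    (s 1 = 1 → S.charpoly.rootMultiplicity 1 =
      (∑ i ∈ Finset.Icc 1 k, t i) - k + 1) := by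
  classical
  have hcval : ∀ q, 1 ≤ q → q ≤ 2*k → 1 ≤ c q := by
    intro q h1 h2
    rcases Nat.even_or_odd q with ⟨r, hr⟩ | ⟨r, hr⟩
    · have h3 := (hc r (by omega) (by omega)).2
      rw [show q = 2*r from by omega, h3]
      exact ht r (by omega) (by omega)
    · have h3 := (hc (r+1) (by omega) (by omega)).1
      rw [show q = 2*(r+1)-1 from by omega, h3]
      exact hs (r+1) (by omega) (by omega)
  have hBstep : ∀ p, p < 2*k → B p < B (p+1) := by
    intro p hp
    have h1 := hB p
    have h2 := hcval (p+1) (by omega) (by omega)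
    omega
  have hBlt : ∀ p q, p < q → q ≤ 2*k → B p < B q := by
    intro p q h1 h2
    induction q with
    | zero => omega
    | succ q ih =>
      rcases Nat.lt_or_ge p q with h | h
      · have ha := ih h (by omega)
        have hb := hBstep q (by omega)
        omega
      · have : p = q := by omega
        subst this
        exact hBstep p (by omega)
  have hloc : ∀ j, j < n → ∃ q, 1 ≤ q ∧ q ≤ 2*k ∧ B (q-1) ≤ j ∧ j < B q := by
    have haux : ∀ p, p ≤ 2*k → ∀ j, j < B p →
        ∃ q, 1 ≤ q ∧ q ≤ 2*k ∧ B (q-1) ≤ j ∧ j < B q := by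
      intro p
      induction p with
      | zero => rw [hB0]; omega
      | succ p ih =>
        intro hp j hj
        rcases Nat.lt_or_ge j (B p) with h | h
        · exact ih (by omega) j h
        · exact ⟨p+1, by omega, hp, by simpa using h, hj⟩
    intro j hj
    exact haux (2*k) le_rfl j (by rw [← hn]; exact hj)
  set γ : ℕ → ℝ := fun j => β (j+1) with hγdef
  have hgo : ∀ r j, 1 ≤ r → r ≤ k → B (2*r-2) ≤ j → j < B (2*r-1) → γ j = 1 := by
    intro r j h1 h2 h3 h4
    have h5 := hβ (2*r-1) (j+1) (by omega) (by omega)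
      (by rw [show 2*r-1-1 = 2*r-2 from by omega]; omega) (by omega)
    show β (j+1) = 1
    rw [h5, show 2*r-1+1 = 2*r from by omega, pow_mul, neg_one_sq, one_pow]
  have hge : ∀ r j, 1 ≤ r → r ≤ k → B (2*r-1) ≤ j → j < B (2*r) → γ j = -1 := by
    intro r j h1 h2 h3 h4
    have h5 := hβ (2*r) (j+1) (by omega) (by omega) (by omega) (by omega)
    show β (j+1) = -1
    rw [h5, pow_succ, pow_mul, neg_one_sq, one_pow, one_mul]
  have hherm : S.IsHermitian := by
    rw [Matrix.IsHermitian]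
    ext i j
    rw [Matrix.conjTranspose_apply, hS, hS]
    by_cases h : i = j
    · subst h; simp
    · rw [if_neg h, if_neg (fun hc' => h hc'.symm), star_trivial]
      congr 2
      omega
  have hM : ∀ i j : Fin n, (S - 1) i j = if i = j then -1 else γ (max i.1 j.1) := by
    intro i j
    rw [Matrix.sub_apply, hS, Matrix.one_apply]
    by_cases h : i = j
    · rw [if_pos h, if_pos h, if_pos h]; norm_num
    · rw [if_neg h, if_neg h, if_neg h, sub_zero]
  set Bad : Finset ℕ := (Finset.Icc 1 n).filter
    (fun m => m = n ∨ γ m = 1 ∨ (2 ≤ m ∧ γ (m-1) = 1)) with hBadDef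
  have hker : ∀ v : Fin n → ℝ, (S - 1) *ᵥ v = 0 ↔
      ∀ m ∈ Bad, (∑ j ∈ Finset.range m, if h : j < n then v ⟨j, h⟩ else 0) = 0 :=
    fun v => aux_key hk hB0 hn hBlt hgo hge hloc (S - 1) hM v
  have hBn : ∀ m ∈ Bad, m ≤ n :=
    fun m hm => (Finset.mem_Icc.mp (Finset.mem_filter.mp hm).1).2
  have h0B : (0:ℕ) ∉ Bad := by
    intro h
    have := (Finset.mem_Icc.mp (Finset.mem_filter.mp h).1).1
    omega
  have hcard := aux_ker_card (S - 1) Bad hBn h0B hker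
  have hrn := aux_rank_nullity (S - 1)
  have hherm2 := aux_herm n S hherm 1
  rw [one_smul] at hherm2
  have hB1 : B 1 = s 1 := by
    have h1 := hB 0
    have h2 := (hc 1 le_rfl hk).1
    rw [hB0] at h1
    norm_num at h1 h2
    omega
  have hBr : ∀ r, 1 ≤ r → r ≤ k → B (2*r) = B (2*r-1) + t r := by
    intro r h1 h2
    have h3 := hB (2*r-1)
    rw [show 2*r-1+1 = 2*r from by omega] at h3
    have h4 := (hc r h1 h2).2
    omega
  have hcount := aux_count hk hB0 hn hBlt hgo hge hloc t ht (s 1) hB1 hBr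
  have hBadGood : Bad.card + ((Finset.Icc 1 n).filter
      (fun m => ¬(m = n ∨ γ m = 1 ∨ (2 ≤ m ∧ γ (m-1) = 1)))).card = n := by
    rw [hBadDef, Finset.card_filter_add_card_filter_not, Nat.card_Icc]
    omega
  constructor
  · intro hs1
    rw [if_neg (by omega : ¬ s 1 = 1)] at hcount
    omega
  · intro hs1
    rw [if_pos hs1] at hcount
    omega
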